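/- Let G be a finite simple graph on vertex set [n] that is perfect, in the sense that its stable set polytope satisfies P_G = {x ∈ ℝⁿ : x ≥ 0 and Σ_{i∈C} x_i ≤ 1 for every clique C of G}. Then the polar of the Hansen polytope H(G) = conv((2·P_G × {1}) ∪ ((−2·P_G) × {−1})) ⊆ ℝⁿ × ℝ satisfies H(G)° = conv(((−P_{Ḡ}) × {1}) ∪ (P_{Ḡ} × {−1})), where Ḡ is the complement graph of G; equivalently, H(G)° is the image of H(Ḡ) under the linear automorphism (x,t) ↦ (−x/2, t) of ℝⁿ × ℝ, so H(G)° is linearly isomorphic to H(Ḡ). -/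

import Mathlib

open Set Pointwise

/-- The stable set polytope of a graph on vertex set `Fin n`: the convex hull of the
indicator vectors of stable (independent) sets. -/
def stablePoly {n : ℕ} (G : SimpleGraph (Fin n)) : Set (Fin n → ℝ) :=
  convexHull ℝ
    {x | ∃ S : Finset (Fin n), (∀ a ∈ S, ∀ b ∈ S, ¬ G.Adj a b) ∧
      x = fun i => if i ∈ S then (1 : ℝ) else 0}

/-- The Hansen polytope `H(G) = conv((2·P_G × {1}) ∪ ((−2·P_G) × {−1}))`. -/
def hansenPoly {n : ℕ} (G : SimpleGraph (Fin n)) : Set ((Fin n → ℝ) × ℝ) :=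
  convexHull ℝ
    (((fun x => (x, (1 : ℝ))) '' ((2 : ℝ) • stablePoly G)) ∪
     ((fun x => (x, (-1 : ℝ))) '' ((-2 : ℝ) • stablePoly G)))

/-- The polar of a subset of `ℝⁿ × ℝ` with respect to the standard inner product. -/
def polarNR {n : ℕ} (S : Set ((Fin n → ℝ) × ℝ)) : Set ((Fin n → ℝ) × ℝ) :=
  {y | ∀ x ∈ S, (∑ i, y.1 i * x.1 i) + y.2 * x.2 ≤ 1}

section helpers
variable {n : ℕ}

private def sgens (G : SimpleGraph (Fin n)) : Set (Fin n → ℝ) :=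
  {x | ∃ S : Finset (Fin n), (∀ a ∈ S, ∀ b ∈ S, ¬ G.Adj a b) ∧
      x = fun i => if i ∈ S then (1 : ℝ) else 0}

private lemma stablePoly_eq (G : SimpleGraph (Fin n)) :
    stablePoly G = convexHull ℝ (sgens G) := rfl

private lemma sgens_finite (G : SimpleGraph (Fin n)) : (sgens G).Finite := by
  apply Set.Finite.subset
    (Set.finite_range (fun S : Finset (Fin n) => fun i => if i ∈ S then (1 : ℝ) else 0))
  rintro x ⟨S, -, rfl⟩
  exact ⟨S, rfl⟩

private lemma sum_mul_indic (y : Fin n → ℝ) (S : Finset (Fin n)) :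
    ∑ i, (if i ∈ S then (1:ℝ) else 0) * y i = ∑ i ∈ S, y i := by
  simp [ite_mul, Finset.sum_ite_mem]

private lemma sum_mul_indic' (y : Fin n → ℝ) (S : Finset (Fin n)) :
    ∑ i, y i * (if i ∈ S then (1:ℝ) else 0) = ∑ i ∈ S, y i := by
  simp [mul_ite, Finset.sum_ite_mem]

private lemma isLinear_dot (p : Fin n → ℝ) :
    IsLinearMap ℝ (fun x : Fin n → ℝ => ∑ i, x i * p i) := by
  constructor
  · intro a b; simp [add_mul, Finset.sum_add_distrib]
  · intro c a; simp [Finset.mul_sum, smul_eq_mul, mul_assoc]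

private lemma hull_dot_le {s : Set (Fin n → ℝ)} {p : Fin n → ℝ} {c : ℝ}
    (h : ∀ g ∈ s, ∑ i, g i * p i ≤ c) {q : Fin n → ℝ} (hq : q ∈ convexHull ℝ s) :
    ∑ i, q i * p i ≤ c :=
  convexHull_min h (convex_halfSpace_le (isLinear_dot p) c) hq

private lemma hull_nonneg {G : SimpleGraph (Fin n)} {q : Fin n → ℝ}
    (hq : q ∈ stablePoly G) (i : Fin n) : 0 ≤ q i := by
  have : Convex ℝ {x : Fin n → ℝ | 0 ≤ x i} :=
    convex_halfSpace_ge ⟨fun a b => rfl, fun c a => rfl⟩ 0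
  refine convexHull_min ?_ this hq
  rintro x ⟨S, -, rfl⟩
  by_cases h : i ∈ S <;> simp [h]

private lemma zero_mem_stablePoly (G : SimpleGraph (Fin n)) :
    (0 : Fin n → ℝ) ∈ stablePoly G := by
  apply subset_convexHull
  exact ⟨∅, by simp, by funext i; simp⟩

private lemma clique_mem (G : SimpleGraph (Fin n)) {C : Finset (Fin n)}
    (hC : ∀ a ∈ C, ∀ b ∈ C, a ≠ b → G.Adj a b) :
    (fun i => if i ∈ C then (1:ℝ) else 0) ∈ sgens Gᶜ :=
  ⟨C, fun a ha b hb hadj => hadj.2 (hC a ha b hb hadj.1), rfl⟩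

private lemma stable_mem (G : SimpleGraph (Fin n)) {S : Finset (Fin n)}
    (hS : ∀ a ∈ S, ∀ b ∈ S, ¬ G.Adj a b) :
    (fun i => if i ∈ S then (1:ℝ) else 0) ∈ sgens G := ⟨S, hS, rfl⟩

/-- Key antiblocker duality. -/
private lemma mem_cliquePoly_of_dual (G : SimpleGraph (Fin n))
    (hperf : stablePoly G =
      {x | (∀ i, 0 ≤ x i) ∧
        ∀ C : Finset (Fin n), (∀ a ∈ C, ∀ b ∈ C, a ≠ b → G.Adj a b) →
          ∑ i ∈ C, x i ≤ 1})
    {y : Fin n → ℝ} (hy0 : ∀ i, 0 ≤ y i)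
    (hyS : ∀ S : Finset (Fin n), (∀ a ∈ S, ∀ b ∈ S, ¬ G.Adj a b) → ∑ i ∈ S, y i ≤ 1) :
    y ∈ stablePoly Gᶜ := by
  classical
  by_contra hy
  rw [stablePoly_eq] at hy
  have hconv : Convex ℝ (convexHull ℝ (sgens Gᶜ)) := convex_convexHull ℝ _
  have hclosed : IsClosed (convexHull ℝ (sgens Gᶜ)) :=
    ((sgens_finite Gᶜ).isCompact_convexHull (𝕜 := ℝ)).isClosed
  obtain ⟨f, u, hfq, hfy⟩ := geometric_hahn_banach_closed_point hconv hclosed hy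
  set c : Fin n → ℝ := fun i => f (fun j => if i = j then 1 else 0) with hc
  have hf : ∀ x : Fin n → ℝ, f x = ∑ i, x i * c i := by
    intro x
    conv_lhs => rw [pi_eq_sum_univ x, map_sum]
    simp [smul_eq_mul, hc]
  have h0Q : (0 : Fin n → ℝ) ∈ convexHull ℝ (sgens Gᶜ) := zero_mem_stablePoly Gᶜ
  have hu : 0 < u := by have := hfq 0 h0Q; simpa using this
  set cp : Fin n → ℝ := fun i => max (c i) 0 with hcp
  have hcp0 : ∀ i, 0 ≤ cp i := fun i => le_max_right _ _
  have hcpq : ∀ q ∈ convexHull ℝ (sgens Gᶜ), ∑ i, q i * cp i < u := by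
    refine fun q hq => convexHull_min ?_ (convex_halfSpace_lt (isLinear_dot cp) u) hq
    rintro g ⟨S, hS, rfl⟩
    have key : ∑ i, (if i ∈ S then (1:ℝ) else 0) * cp i
        = ∑ i ∈ S.filter (fun i => 0 ≤ c i), c i := by
      rw [sum_mul_indic, Finset.sum_filter]
      refine Finset.sum_congr rfl fun i _ => ?_
      by_cases h : 0 ≤ c i
      · simp [hcp, h, max_eq_left h]
      · simp [hcp, h, max_eq_right (le_of_not_ge h)]
    rw [Set.mem_setOf_eq, key]
    have hS' : (fun i => if i ∈ S.filter (fun i => 0 ≤ c i) then (1:ℝ) else 0) ∈ sgens Gᶜ :=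
      ⟨_, fun a ha b hb => hS a (Finset.mem_of_mem_filter a ha) b
        (Finset.mem_of_mem_filter b hb), rfl⟩
    have := hfq _ (subset_convexHull ℝ _ hS')
    rwa [hf, sum_mul_indic] at this
  set d : Fin n → ℝ := fun i => u⁻¹ * cp i with hd
  have hdP : d ∈ stablePoly G := by
    rw [hperf]
    refine ⟨fun i => mul_nonneg (le_of_lt (inv_pos.2 hu)) (hcp0 i), fun C hC => ?_⟩
    have h1 : ∑ i ∈ C, cp i < u := by
      have := hcpq _ (subset_convexHull ℝ _ (clique_mem G hC))
      rwa [sum_mul_indic] at this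
    have h2 : ∑ i ∈ C, d i = u⁻¹ * ∑ i ∈ C, cp i := by rw [Finset.mul_sum]
    rw [h2, inv_mul_le_iff₀ hu, mul_one]
    exact le_of_lt h1
  have hpair : ∑ i, d i * y i ≤ 1 := by
    refine hull_dot_le ?_ hdP
    rintro g ⟨S, hS, rfl⟩
    rw [sum_mul_indic]; exact hyS S hS
  have hcy : u < ∑ i, y i * c i := by rw [← hf]; exact hfy
  have hcpy : ∑ i, y i * c i ≤ ∑ i, y i * cp i :=
    Finset.sum_le_sum fun i _ => mul_le_mul_of_nonneg_left (le_max_left _ _) (hy0 i)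
  have h3 : ∑ i, d i * y i = u⁻¹ * ∑ i, y i * cp i := by
    rw [Finset.mul_sum]; exact Finset.sum_congr rfl fun i _ => by simp [hd]; ring
  rw [h3, inv_mul_le_iff₀ hu, mul_one] at hpair
  linarith

private lemma sum_dot_smul (q p : Fin n → ℝ) (c : ℝ) :
    ∑ i, q i * (c • p) i = c * ∑ i, q i * p i := by
  rw [Finset.mul_sum]
  exact Finset.sum_congr rfl fun i _ => by simp [smul_eq_mul]; ring

private lemma sum_neg_dot (q z : Fin n → ℝ) :
    ∑ i, (-q) i * z i = -∑ i, q i * z i := by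
  simp [neg_mul]

private lemma isLinear_pairing (y : Fin n → ℝ) (t : ℝ) :
    IsLinearMap ℝ (fun x : (Fin n → ℝ) × ℝ => (∑ i, y i * x.1 i) + t * x.2) := by
  constructor
  · intro a b
    simp only [Prod.fst_add, Prod.snd_add, Pi.add_apply, mul_add, Finset.sum_add_distrib]
    ring
  · intro c a
    simp only [Prod.smul_fst, Prod.smul_snd, Pi.smul_apply, smul_eq_mul, mul_add,
      Finset.mul_sum]
    congr 1
    · exact Finset.sum_congr rfl fun i _ => by ring
    · ring

private lemma polar_convex (S : Set ((Fin n → ℝ) × ℝ)) : Convex ℝ (polarNR S) := by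
  intro y hy z hz a b ha hb hab
  intro x hx
  have h1 := hy x hx
  have h2 := hz x hx
  have key : (∑ i, (a • y + b • z).1 i * x.1 i) + (a • y + b • z).2 * x.2
      = a * ((∑ i, y.1 i * x.1 i) + y.2 * x.2) + b * ((∑ i, z.1 i * x.1 i) + z.2 * x.2) := by
    simp only [Prod.fst_add, Prod.snd_add, Prod.smul_fst, Prod.smul_snd, Pi.add_apply,
      Pi.smul_apply, smul_eq_mul, add_mul, Finset.sum_add_distrib, mul_add, mul_assoc,
      ← Finset.mul_sum]
    ring
  show (∑ i, (a • y + b • z).1 i * x.1 i) + (a • y + b • z).2 * x.2 ≤ 1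
  rw [key]
  calc a * ((∑ i, y.1 i * x.1 i) + y.2 * x.2) + b * ((∑ i, z.1 i * x.1 i) + z.2 * x.2)
      ≤ a * 1 + b * 1 :=
        add_le_add (mul_le_mul_of_nonneg_left h1 ha) (mul_le_mul_of_nonneg_left h2 hb)
    _ = 1 := by rw [mul_one, mul_one, hab]

end helpers

/-- If `G` is perfect (its stable set polytope is cut out by nonnegativity and clique
inequalities), then `H(G)° = conv(((−P_{Ḡ}) × {1}) ∪ (P_{Ḡ} × {−1}))`, which is the
image of `H(Ḡ)` under the linear automorphism `(x,t) ↦ (−x/2, t)`; in particular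
`H(G)°` is linearly isomorphic to `H(Ḡ)`. -/
theorem hansen_polar_of_perfect {n : ℕ} (G : SimpleGraph (Fin n))
    (hperf : stablePoly G =
      {x | (∀ i, 0 ≤ x i) ∧
        ∀ C : Finset (Fin n), (∀ a ∈ C, ∀ b ∈ C, a ≠ b → G.Adj a b) →
          ∑ i ∈ C, x i ≤ 1}) :
    polarNR (hansenPoly G) =
      convexHull ℝ
        (((fun x => (x, (1 : ℝ))) '' (-(stablePoly Gᶜ))) ∪
         ((fun x => (x, (-1 : ℝ))) '' (stablePoly Gᶜ))) ∧
    polarNR (hansenPoly G) =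
      (fun p : (Fin n → ℝ) × ℝ => (-(1 / 2 : ℝ) • p.1, p.2)) '' hansenPoly Gᶜ := by
  classical
  -- notation
  set Q := stablePoly Gᶜ with hQdef
  set P := stablePoly G with hPdef
  set U : Set ((Fin n → ℝ) × ℝ) :=
    ((fun x => (x, (1 : ℝ))) '' (-Q)) ∪ ((fun x => (x, (-1 : ℝ))) '' Q) with hUdef
  -- basic facts from perfection
  have hP0 : ∀ p ∈ P, ∀ i, 0 ≤ p i := fun p hp => (hperf ▸ hp).1
  have hPC : ∀ p ∈ P, ∀ C : Finset (Fin n),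
      (∀ a ∈ C, ∀ b ∈ C, a ≠ b → G.Adj a b) → ∑ i ∈ C, p i ≤ 1 :=
    fun p hp => (hperf ▸ hp).2
  -- pairing bounds
  have hpair_le : ∀ p ∈ P, ∀ q ∈ Q, ∑ i, q i * p i ≤ 1 := by
    intro p hp q hq
    refine hull_dot_le ?_ hq
    rintro g ⟨C, hC, rfl⟩
    rw [sum_mul_indic]
    refine hPC p hp C fun a ha b hb hne => ?_
    by_contra hadj
    exact hC a ha b hb ⟨hne, hadj⟩
  have hpair_nonneg : ∀ p ∈ P, ∀ q ∈ Q, 0 ≤ ∑ i, q i * p i := by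
    intro p hp q hq
    exact Finset.sum_nonneg fun i _ => mul_nonneg (hull_nonneg hq i) (hP0 p hp i)
  -- membership of the two kinds of generators in the polar
  have hgen_polar : ∀ w ∈ U, w ∈ polarNR (hansenPoly G) := by
    rintro w (⟨x, hx, rfl⟩ | ⟨x, hx, rfl⟩)
    · -- w = (x, 1) with -x ∈ Q
      rw [Set.mem_neg] at hx
      intro z hz
      have hconv : Convex ℝ {z : (Fin n → ℝ) × ℝ |
          (∑ i, x i * z.1 i) + (1:ℝ) * z.2 ≤ 1} :=
        convex_halfSpace_le (isLinear_pairing x 1) 1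
      have hsub : hansenPoly G ⊆ {z : (Fin n → ℝ) × ℝ |
          (∑ i, x i * z.1 i) + (1:ℝ) * z.2 ≤ 1} := by
        refine convexHull_min ?_ hconv
        rintro z' (⟨x', ⟨p, hp, rfl⟩, rfl⟩ | ⟨x', ⟨p, hp, rfl⟩, rfl⟩)
        · have h1 : ∑ i, x i * ((2:ℝ) • p) i = 2 * ∑ i, x i * p i := sum_dot_smul x p 2
          have h2 : ∑ i, x i * p i = -∑ i, (-x) i * p i := by rw [sum_neg_dot]; ring
          have h3 := hpair_nonneg p hp (-x) hx
          show (∑ i, x i * ((2:ℝ) • p) i) + (1:ℝ) * (1:ℝ) ≤ 1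
          rw [h1, h2]
          nlinarith
        · have h1 : ∑ i, x i * ((-2:ℝ) • p) i = -2 * ∑ i, x i * p i := sum_dot_smul x p (-2)
          have h2 : ∑ i, x i * p i = -∑ i, (-x) i * p i := by rw [sum_neg_dot]; ring
          have h3 := hpair_le p hp (-x) hx
          show (∑ i, x i * ((-2:ℝ) • p) i) + (1:ℝ) * (-1:ℝ) ≤ 1
          rw [h1, h2]
          nlinarith
      have := hsub hz
      simpa using this
    · -- w = (x, -1) with x ∈ Q
      intro z hz
      have hconv : Convex ℝ {z : (Fin n → ℝ) × ℝ |
          (∑ i, x i * z.1 i) + (-1:ℝ) * z.2 ≤ 1} :=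
        convex_halfSpace_le (isLinear_pairing x (-1)) 1
      have hsub : hansenPoly G ⊆ {z : (Fin n → ℝ) × ℝ |
          (∑ i, x i * z.1 i) + (-1:ℝ) * z.2 ≤ 1} := by
        refine convexHull_min ?_ hconv
        rintro z' (⟨x', ⟨p, hp, rfl⟩, rfl⟩ | ⟨x', ⟨p, hp, rfl⟩, rfl⟩)
        · have h1 : ∑ i, x i * ((2:ℝ) • p) i = 2 * ∑ i, x i * p i := sum_dot_smul x p 2
          have h3 := hpair_le p hp x hx
          show (∑ i, x i * ((2:ℝ) • p) i) + (-1:ℝ) * (1:ℝ) ≤ 1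
          rw [h1]; nlinarith
        · have h1 : ∑ i, x i * ((-2:ℝ) • p) i = -2 * ∑ i, x i * p i := sum_dot_smul x p (-2)
          have h3 := hpair_nonneg p hp x hx
          show (∑ i, x i * ((-2:ℝ) • p) i) + (-1:ℝ) * (-1:ℝ) ≤ 1
          rw [h1]; nlinarith
      have := hsub hz
      simpa using this
  -- ⊇ of the first goal
  have hsup : convexHull ℝ U ⊆ polarNR (hansenPoly G) :=
    convexHull_min hgen_polar (polar_convex _)
  -- ⊆ of the first goal
  have hsub : polarNR (hansenPoly G) ⊆ convexHull ℝ U := by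
    rintro ⟨y, t⟩ hmem
    -- conditions on stable sets
    have cond1 : ∀ p ∈ P, 2 * (∑ i, y i * p i) + t ≤ 1 := by
      intro p hp
      have hx : ((2:ℝ) • p, (1:ℝ)) ∈ hansenPoly G :=
        subset_convexHull ℝ _ (Or.inl ⟨(2:ℝ) • p, ⟨p, hp, rfl⟩, rfl⟩)
      have := hmem _ hx
      rw [show (((2:ℝ) • p, (1:ℝ)) : (Fin n → ℝ) × ℝ).1 = (2:ℝ) • p from rfl] at this
      rw [sum_dot_smul y p 2] at this
      simpa using this
    have cond2 : ∀ p ∈ P, -(2 * (∑ i, y i * p i)) - t ≤ 1 := by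
      intro p hp
      have hx : ((-2:ℝ) • p, (-1:ℝ)) ∈ hansenPoly G :=
        subset_convexHull ℝ _ (Or.inr ⟨(-2:ℝ) • p, ⟨p, hp, rfl⟩, rfl⟩)
      have := hmem _ hx
      rw [show (((-2:ℝ) • p, (-1:ℝ)) : (Fin n → ℝ) × ℝ).1 = (-2:ℝ) • p from rfl] at this
      rw [sum_dot_smul y p (-2)] at this
      have h2 : -2 * (∑ i, y i * p i) + t * (-1) ≤ 1 := this
      linarith
    have stab1 : ∀ S : Finset (Fin n), (∀ a ∈ S, ∀ b ∈ S, ¬ G.Adj a b) →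
        2 * (∑ i ∈ S, y i) + t ≤ 1 := by
      intro S hS
      have hp : (fun i => if i ∈ S then (1:ℝ) else 0) ∈ P :=
        subset_convexHull ℝ _ (stable_mem G hS)
      have := cond1 _ hp
      rwa [sum_mul_indic'] at this
    have stab2 : ∀ S : Finset (Fin n), (∀ a ∈ S, ∀ b ∈ S, ¬ G.Adj a b) →
        -(2 * (∑ i ∈ S, y i)) - t ≤ 1 := by
      intro S hS
      have hp : (fun i => if i ∈ S then (1:ℝ) else 0) ∈ P :=
        subset_convexHull ℝ _ (stable_mem G hS)
      have := cond2 _ hp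
      rwa [sum_mul_indic'] at this
    have h0P : (0 : Fin n → ℝ) ∈ P := zero_mem_stablePoly G
    have ht1 : t ≤ 1 := by have := cond1 0 h0P; simpa using this
    have ht2 : -1 ≤ t := by have := cond2 0 h0P; simp at this; linarith
    set lam : ℝ := (1 + t) / 2 with hlam
    have hl0 : 0 ≤ lam := by rw [hlam]; linarith
    have hl1 : lam ≤ 1 := by rw [hlam]; linarith
    set ypos : Fin n → ℝ := fun i => max (y i) 0 with hypos
    set yneg : Fin n → ℝ := fun i => max (-y i) 0 with hyneg
    have hsingle : ∀ i : Fin n, ∀ a ∈ ({i} : Finset (Fin n)), ∀ b ∈ ({i} : Finset (Fin n)),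
        ¬ G.Adj a b := by
      intro i a ha b hb
      rw [Finset.mem_singleton] at ha hb
      subst ha; subst hb
      exact G.irrefl
    have hpos_sum : ∀ S : Finset (Fin n), (∀ a ∈ S, ∀ b ∈ S, ¬ G.Adj a b) →
        ∑ i ∈ S, ypos i ≤ 1 - lam := by
      intro S hS
      set S' := S.filter (fun i => 0 ≤ y i) with hS'
      have hkey : ∑ i ∈ S, ypos i = ∑ i ∈ S', y i := by
        rw [hS', Finset.sum_filter]
        refine Finset.sum_congr rfl fun i _ => ?_
        by_cases h : 0 ≤ y i
        · simp [hypos, h, max_eq_left h]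
        · simp [hypos, h, max_eq_right (le_of_not_ge h)]
      have hstab := stab1 S' (fun a ha b hb =>
        hS a (Finset.mem_of_mem_filter a ha) b (Finset.mem_of_mem_filter b hb))
      rw [hkey, hlam]; linarith
    have hneg_sum : ∀ S : Finset (Fin n), (∀ a ∈ S, ∀ b ∈ S, ¬ G.Adj a b) →
        ∑ i ∈ S, yneg i ≤ lam := by
      intro S hS
      set S' := S.filter (fun i => 0 ≤ -y i) with hS'
      have hkey : ∑ i ∈ S, yneg i = -∑ i ∈ S', y i := by
        rw [hS', ← Finset.sum_neg_distrib, Finset.sum_filter]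
        refine Finset.sum_congr rfl fun i _ => ?_
        by_cases h : 0 ≤ -y i
        · simp [hyneg, h, max_eq_left h]
        · simp [hyneg, h, max_eq_right (le_of_not_ge h)]
      have hstab := stab2 S' (fun a ha b hb =>
        hS a (Finset.mem_of_mem_filter a ha) b (Finset.mem_of_mem_filter b hb))
      rw [hkey, hlam]; linarith
    set q1 : Fin n → ℝ := if lam = 0 then 0 else lam⁻¹ • yneg with hq1def
    set q2 : Fin n → ℝ := if lam = 1 then 0 else (1 - lam)⁻¹ • ypos with hq2def
    have hq1 : q1 ∈ Q := by
      by_cases h : lam = 0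
      · rw [hq1def, if_pos h]; exact zero_mem_stablePoly Gᶜ
      · have hlp : 0 < lam := lt_of_le_of_ne hl0 (Ne.symm h)
        rw [hq1def, if_neg h]
        refine mem_cliquePoly_of_dual G hperf
          (fun i => mul_nonneg (le_of_lt (inv_pos.2 hlp)) (le_max_right _ _)) ?_
        intro S hS
        have h1 : ∑ i ∈ S, (lam⁻¹ • yneg) i = lam⁻¹ * ∑ i ∈ S, yneg i := by
          rw [Finset.mul_sum]; exact Finset.sum_congr rfl fun i _ => by simp
        rw [h1, inv_mul_le_iff₀ hlp, mul_one]
        exact hneg_sum S hS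
    have hq2 : q2 ∈ Q := by
      by_cases h : lam = 1
      · rw [hq2def, if_pos h]; exact zero_mem_stablePoly Gᶜ
      · have hlp : 0 < 1 - lam := by
          rcases lt_or_eq_of_le hl1 with h' | h'
          · linarith
          · exact absurd h' h
        rw [hq2def, if_neg h]
        refine mem_cliquePoly_of_dual G hperf
          (fun i => mul_nonneg (le_of_lt (inv_pos.2 hlp)) (le_max_right _ _)) ?_
        intro S hS
        have h1 : ∑ i ∈ S, ((1-lam)⁻¹ • ypos) i = (1-lam)⁻¹ * ∑ i ∈ S, ypos i := by
          rw [Finset.mul_sum]; exact Finset.sum_congr rfl fun i _ => by simp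
        rw [h1, inv_mul_le_iff₀ hlp, mul_one]
        exact hpos_sum S hS
    -- decomposition of y
    have hyneg0 : lam = 0 → ∀ i, yneg i = 0 := by
      intro h i
      have h1 := hneg_sum {i} (hsingle i)
      rw [Finset.sum_singleton, h] at h1
      exact le_antisymm h1 (le_max_right _ _)
    have hypos0 : lam = 1 → ∀ i, ypos i = 0 := by
      intro h i
      have h1 := hpos_sum {i} (hsingle i)
      rw [Finset.sum_singleton, h] at h1
      have : ypos i ≤ 0 := by linarith
      exact le_antisymm this (le_max_right _ _)
    have hydecomp : ∀ i, y i = lam * (-q1 i) + (1 - lam) * q2 i := by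
      intro i
      have hself : ypos i - yneg i = y i := max_zero_sub_max_neg_zero_eq_self (y i)
      by_cases h0 : lam = 0
      · have h1 : lam ≠ 1 := by rw [h0]; norm_num
        rw [hq1def, hq2def, if_pos h0, if_neg h1, h0]
        have := hyneg0 h0 i
        simp only [Pi.smul_apply, smul_eq_mul]
        rw [show (1:ℝ) - 0 = 1 by ring]
        simp only [inv_one, one_mul, Pi.zero_apply]
        linarith
      · by_cases h1 : lam = 1
        · rw [hq1def, hq2def, if_neg h0, if_pos h1]
          have hyp := hypos0 h1 i
          simp only [Pi.smul_apply, smul_eq_mul, Pi.zero_apply, h1, inv_one]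
          ring_nf
          linarith [hself, hyp]
        · rw [hq1def, hq2def, if_neg h0, if_neg h1]
          simp only [Pi.smul_apply, smul_eq_mul]
          have hne : (1:ℝ) - lam ≠ 0 := fun hc => h1 (by linarith)
          have e1 : lam * -(lam⁻¹ * yneg i) = -yneg i := by
            rw [mul_neg, ← mul_assoc, mul_inv_cancel₀ h0, one_mul]
          have e2 : (1 - lam) * ((1 - lam)⁻¹ * ypos i) = ypos i := by
            rw [← mul_assoc, mul_inv_cancel₀ hne, one_mul]
          rw [e1, e2]
          linarith [hself]
    -- conclude membership
    have hw1 : ((-q1, (1:ℝ)) : (Fin n → ℝ) × ℝ) ∈ U :=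
      Or.inl ⟨-q1, by rw [Set.mem_neg, neg_neg]; exact hq1, rfl⟩
    have hw2 : ((q2, (-1:ℝ)) : (Fin n → ℝ) × ℝ) ∈ U :=
      Or.inr ⟨q2, hq2, rfl⟩
    have hcomb := (convex_convexHull ℝ U) (subset_convexHull ℝ _ hw1)
      (subset_convexHull ℝ _ hw2) hl0 (by linarith : (0:ℝ) ≤ 1 - lam) (by ring)
    have heq : ((y, t) : (Fin n → ℝ) × ℝ)
        = lam • ((-q1, (1:ℝ)) : (Fin n → ℝ) × ℝ) + (1 - lam) • ((q2, (-1:ℝ))) := by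
      refine Prod.ext ?_ ?_
      · funext i
        simp only [Prod.fst_add, Prod.smul_fst, Pi.add_apply, Pi.smul_apply, smul_eq_mul,
          Pi.neg_apply]
        exact hydecomp i
      · simp only [Prod.snd_add, Prod.smul_snd, smul_eq_mul]
        rw [hlam]; ring
    rw [heq]
    exact hcomb
  have goal1 : polarNR (hansenPoly G) = convexHull ℝ U := Set.Subset.antisymm hsub hsup
  refine ⟨goal1, ?_⟩
  -- second goal
  rw [goal1]
  set L : ((Fin n → ℝ) × ℝ) →ₗ[ℝ] ((Fin n → ℝ) × ℝ) :=
    LinearMap.prodMap ((-(1/2 : ℝ)) • LinearMap.id) LinearMap.id with hL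
  have hLfun : (fun p : (Fin n → ℝ) × ℝ => (-(1 / 2 : ℝ) • p.1, p.2)) = ⇑L := rfl
  rw [hLfun, hansenPoly, L.image_convexHull, Set.image_union]
  congr 1
  have e1 : ⇑L '' ((fun x => (x, (1 : ℝ))) '' ((2 : ℝ) • Q))
      = (fun x => (x, (1 : ℝ))) '' (-Q) := by
    ext z
    constructor
    · rintro ⟨w, ⟨v, ⟨q, hq, rfl⟩, rfl⟩, rfl⟩
      refine ⟨-q, ?_, ?_⟩
      · rw [Set.mem_neg, neg_neg]; exact hq
      · show ((-q : Fin n → ℝ), (1:ℝ)) = L ((2:ℝ) • q, 1)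
        refine Prod.ext ?_ rfl
        show -q = (-(1/2 : ℝ)) • ((2:ℝ) • q)
        rw [smul_smul]; norm_num [neg_one_smul]
    · rintro ⟨x, hx, rfl⟩
      rw [Set.mem_neg] at hx
      refine ⟨((2:ℝ) • (-x), (1:ℝ)), ⟨(2:ℝ) • (-x), ⟨-x, hx, rfl⟩, rfl⟩, ?_⟩
      show (L ((2:ℝ) • (-x), 1) : (Fin n → ℝ) × ℝ) = (x, 1)
      refine Prod.ext ?_ rfl
      show (-(1/2 : ℝ)) • ((2:ℝ) • (-x)) = x
      rw [smul_smul]; norm_num [neg_one_smul]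
  have e2 : ⇑L '' ((fun x => (x, (-1 : ℝ))) '' ((-2 : ℝ) • Q))
      = (fun x => (x, (-1 : ℝ))) '' Q := by
    ext z
    constructor
    · rintro ⟨w, ⟨v, ⟨q, hq, rfl⟩, rfl⟩, rfl⟩
      refine ⟨q, hq, ?_⟩
      show ((q : Fin n → ℝ), (-1:ℝ)) = L ((-2:ℝ) • q, -1)
      refine Prod.ext ?_ rfl
      show q = (-(1/2 : ℝ)) • ((-2:ℝ) • q)
      rw [smul_smul]; norm_num
    · rintro ⟨x, hx, rfl⟩
      refine ⟨((-2:ℝ) • x, (-1:ℝ)), ⟨(-2:ℝ) • x, ⟨x, hx, rfl⟩, rfl⟩, ?_⟩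
      show (L ((-2:ℝ) • x, -1) : (Fin n → ℝ) × ℝ) = (x, -1)
      refine Prod.ext ?_ rfl
      show (-(1/2 : ℝ)) • ((-2:ℝ) • x) = x
      rw [smul_smul]; norm_num
  rw [e1, e2]
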